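/- If (x_n) is a sequence in a Banach space X such that for every subset M of the index set the partial sums over finite subsets of M converge weakly, then the series ∑ x_n converges unconditionally in norm (Orlicz–Pettis type consequence). -/

import Mathlib

open MeasureTheory Filter Topology Set TopologicalSpace

private lemma op_dual_eq {X : Type*} [NormedAddCommGroup X] [NormedSpace ℝ X] {u v : X}
    (h : ∀ φ : X →L[ℝ] ℝ, φ u = φ v) : u = v := by
  by_contra hne
  obtain ⟨g, hg1, hg2⟩ := exists_dual_vector ℝ (u - v) (norm_ne_zero_iff.2 (sub_ne_zero.2 hne))
  have hg2' : g (u - v) = ‖u - v‖ := by exact_mod_cast hg2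
  have : g u - g v = ‖u - v‖ := by rw [← map_sub]; exact hg2'
  rw [h g, sub_self] at this
  exact (norm_ne_zero_iff.2 (sub_ne_zero.2 hne)) this.symm

set_option maxHeartbeats 2000000 in
private lemma op_key {X : Type*} [NormedAddCommGroup X] [NormedSpace ℝ X]
    (z : ℕ → X)
    (h : ∀ M : Set ℕ, ∃ a : X, ∀ φ : X →L[ℝ] ℝ,
      HasSum (fun n : M => φ (z (↑n))) (φ a))
    {ε : ℝ} (hε : 0 < ε) : ∃ N : ℕ, ∀ n ≥ N, ‖z n‖ ≤ ε := by
  classical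
  choose F hF using h
  set S : (ℕ → Bool) → Set ℕ := fun ω => {n | ω n = true} with hS
  set f : (ℕ → Bool) → X := fun ω => F (S ω) with hfdef
  have hf : ∀ (ω : ℕ → Bool) (φ : X →L[ℝ] ℝ), HasSum (fun n : S ω => φ (z ↑n)) (φ (f ω)) :=
    fun ω => hF (S ω)
  have hind : ∀ (ω : ℕ → Bool) (φ : X →L[ℝ] ℝ),
      HasSum ((S ω).indicator (fun n => φ (z n))) (φ (f ω)) :=
    fun ω φ => hasSum_subtype_iff_indicator.mp (hf ω φ)
  -- summability of |φ (z n)|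
  have hsum : ∀ φ : X →L[ℝ] ℝ, Summable (fun n => |φ (z n)|) := by
    intro φ
    have h1 : HasSum ((Set.univ : Set ℕ).indicator (fun n => φ (z n))) (φ (F Set.univ)) :=
      hasSum_subtype_iff_indicator.mp (hF Set.univ φ)
    rw [Set.indicator_univ] at h1
    exact summable_abs_iff.mpr h1.summable
  -- continuity of φ ∘ f
  have hcont : ∀ φ : X →L[ℝ] ℝ, Continuous fun ω : ℕ → Bool => φ (f ω) := by
    intro φ
    set g : ℕ → ℝ := fun n => φ (z n) with hg
    have hgs := hsum φ
    set P : ℕ → (ℕ → Bool) → ℝ := fun N ω => ∑ n ∈ Finset.range N, (S ω).indicator g n with hP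
    have hFc : ∀ N, Continuous (P N) := by
      intro N
      apply continuous_finset_sum
      intro n _
      have hrw : (fun ω : ℕ → Bool => (S ω).indicator g n)
          = (fun b : Bool => if b = true then g n else 0) ∘ (fun ω : ℕ → Bool => ω n) := by
        funext ω
        by_cases hb : ω n = true <;> simp [Set.indicator, hS, hb]
      rw [hrw]
      exact (continuous_of_discreteTopology).comp (continuous_apply n)
    have hunif : TendstoUniformly P (fun ω => φ (f ω)) atTop := by
      rw [Metric.tendstoUniformly_iff]
      intro δ hδ
      have htail : Tendsto (fun N => ∑' k, |g (k + N)|) atTop (𝓝 0) :=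
        tendsto_sum_nat_add (fun n => |g n|)
      filter_upwards [htail.eventually_lt_const hδ] with N hN ω
      have hsum' : Summable ((S ω).indicator g) := (hind ω φ).summable
      have habs : Summable fun i => |g (i + N)| := (summable_nat_add_iff N).mpr hgs
      have hptw : ∀ i, ‖(S ω).indicator g (i + N)‖ ≤ |g (i + N)| := by
        intro i
        rw [Real.norm_eq_abs]
        by_cases hm : (i + N) ∈ S ω
        · rw [Set.indicator_of_mem hm]
        · rw [Set.indicator_of_notMem hm]
          simp [abs_nonneg]
      have hsn : Summable fun i => ‖(S ω).indicator g (i + N)‖ :=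
        Summable.of_nonneg_of_le (fun i => norm_nonneg _) hptw habs
      have heq : φ (f ω) - P N ω = ∑' i, (S ω).indicator g (i + N) := by
        have h2 := hsum'.sum_add_tsum_nat_add N
        have h3 : φ (f ω) = ∑' n, (S ω).indicator g n := (hind ω φ).tsum_eq.symm
        rw [h3, ← h2]
        simp only [hP]
        ring
      calc dist (φ (f ω)) (P N ω) = |φ (f ω) - P N ω| := Real.dist_eq _ _
        _ = ‖∑' i, (S ω).indicator g (i + N)‖ := by rw [heq, Real.norm_eq_abs]
        _ ≤ ∑' i, ‖(S ω).indicator g (i + N)‖ := norm_tsum_le_tsum_norm hsn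
        _ ≤ ∑' i, |g (i + N)| := Summable.tsum_le_tsum hptw hsn habs
        _ < δ := hN
    exact hunif.continuous (Frequently.of_forall hFc)
  -- range of f is in the closure of the span of range z
  set Yset : Set X := closure ↑(Submodule.span ℝ (Set.range z)) with hYdef
  have h0Y : (0 : X) ∈ Yset := subset_closure (Submodule.zero_mem _)
  have hY : ∀ ω, f ω ∈ Yset := by
    intro ω
    by_contra hmem
    obtain ⟨φ, u, hu1, hu2⟩ := geometric_hahn_banach_closed_point
      ((Submodule.span ℝ (Set.range z)).convex.closure) isClosed_closure hmem
    have hzero : ∀ n, φ (z n) = 0 := by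
      intro n
      by_contra hne
      have hmemn : ((|u| + 1) / φ (z n)) • z n ∈ Yset :=
        subset_closure (Submodule.smul_mem _ _ (Submodule.subset_span ⟨n, rfl⟩))
      have h2 := hu1 _ hmemn
      rw [φ.map_smul, smul_eq_mul, div_mul_cancel₀ _ hne] at h2
      have := le_abs_self u
      linarith
    have hzsum : HasSum (fun n : S ω => φ (z ↑n)) 0 := by
      have : (fun n : S ω => φ (z ↑n)) = fun _ => (0 : ℝ) := funext fun n => hzero n
      rw [this]
      exact hasSum_zero
    have hfz : φ (f ω) = 0 := (hf ω φ).unique hzsum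
    have h3 := hu1 0 h0Y
    rw [map_zero] at h3
    rw [hfz] at hu2
    linarith
  -- separability / countable dense family
  have hsep : IsSeparable Yset := ((Set.countable_range z).isSeparable.span).closure
  obtain ⟨D, hDc, hDsub⟩ := hsep
  have hDne : D.Nonempty := by
    rcases Set.eq_empty_or_nonempty D with hD | hD
    · rw [hD, closure_empty] at hDsub
      exact absurd (hDsub h0Y) (Set.notMem_empty _)
    · exact hD
  obtain ⟨c, hc⟩ := hDc.exists_eq_range hDne
  -- the closed sets for Baire
  set E : ℕ → Set (ℕ → Bool) := fun i => {ω | ‖f ω - c i‖ ≤ ε / 3} with hE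
  have hEclosed : ∀ i, IsClosed (E i) := by
    intro i
    have hEeq : E i = ⋂ (φ : X →L[ℝ] ℝ), ⋂ (_ : ‖φ‖ = 1),
        {ω | φ (f ω) - φ (c i) ≤ ε / 3} := by
      ext ω
      simp only [hE, Set.mem_iInter, Set.mem_setOf_eq]
      constructor
      · intro hω φ hφ
        have h1 : φ (f ω) - φ (c i) ≤ |φ (f ω - c i)| := by
          rw [← map_sub]; exact le_abs_self _
        have h2 : |φ (f ω - c i)| ≤ ‖φ‖ * ‖f ω - c i‖ := by
          rw [← Real.norm_eq_abs]; exact φ.le_opNorm _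
        rw [hφ, one_mul] at h2
        linarith
      · intro hω
        by_contra hgt
        push_neg at hgt
        have hne : f ω - c i ≠ 0 := by
          intro h0
          rw [h0, norm_zero] at hgt
          linarith
        obtain ⟨g, hg1, hg2⟩ := exists_dual_vector ℝ (f ω - c i) (norm_ne_zero_iff.2 hne)
        have hg2' : g (f ω - c i) = ‖f ω - c i‖ := by exact_mod_cast hg2
        have h3 := hω g hg1
        rw [← map_sub, hg2'] at h3
        linarith
    rw [hEeq]
    exact isClosed_iInter fun φ => isClosed_iInter fun _ =>
      isClosed_le ((hcont φ).sub continuous_const) continuous_const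
  have hcover : ⋃ i, E i = Set.univ := by
    ext ω
    simp only [Set.mem_iUnion, Set.mem_univ, iff_true]
    have hmem : f ω ∈ closure D := hDsub (hY ω)
    rw [Metric.mem_closure_iff] at hmem
    obtain ⟨b, hbD, hbd⟩ := hmem (ε / 3) (by linarith)
    rw [hc] at hbD
    obtain ⟨i, rfl⟩ := hbD
    exact ⟨i, le_of_lt (by rwa [dist_eq_norm] at hbd)⟩
  -- the flip identities
  have hstep : ∀ (ω : ℕ → Bool) (n : ℕ), ω n = false →
      f (Function.update ω n true) = f ω + z n := by
    intro ω n hωn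
    set ω' := Function.update ω n true with hω'
    apply op_dual_eq
    intro φ
    set g : ℕ → ℝ := fun m => φ (z m) with hg
    have h1 : HasSum ((S ω).indicator g) (φ (f ω)) := hind ω φ
    have h2 : HasSum (fun m => if m = n then g n else 0) (g n) := hasSum_ite_eq n (g n)
    have h3 : (S ω').indicator g
        = fun m => (S ω).indicator g m + if m = n then g n else 0 := by
      funext m
      by_cases hm : m = n
      · subst hm
        have hmem : m ∈ S ω' := by simp [hS, hω', Function.update_self]
        have hnmem : m ∉ S ω := by simp [hS, hωn]
        simp [Set.indicator_of_mem hmem, Set.indicator_of_notMem hnmem]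
      · have hiff : m ∈ S ω' ↔ m ∈ S ω := by
          simp [hS, hω', Function.update_of_ne hm]
        by_cases hm2 : m ∈ S ω
        · simp [Set.indicator_of_mem (hiff.mpr hm2), Set.indicator_of_mem hm2, hm]
        · simp [Set.indicator_of_notMem (fun hcon => hm2 (hiff.mp hcon)),
            Set.indicator_of_notMem hm2, hm]
    have h4 : HasSum ((S ω').indicator g) (φ (f ω) + g n) := by
      rw [h3]; exact h1.add h2
    rw [map_add]
    exact (hind ω' φ).unique h4
  have hflip : ∀ (ω : ℕ → Bool) (n : ℕ),
      ‖f (Function.update ω n (!(ω n))) - f ω‖ = ‖z n‖ := by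
    intro ω n
    cases hb : ω n with
    | false =>
        have h1 := hstep ω n hb
        simp only [Bool.not_false]
        rw [h1, add_sub_cancel_left]
    | true =>
        set ω₀ := Function.update ω n false with hω₀def
        have hω₀n : ω₀ n = false := by simp [hω₀def, Function.update_self]
        have h1 := hstep ω₀ n hω₀n
        have hupd : Function.update ω n (ω n) = ω := Function.update_eq_self n ω
        rw [hb] at hupd
        have h2 : Function.update ω₀ n true = ω := by
          rw [hω₀def, Function.update_idem, hupd]
        rw [h2] at h1
        simp only [Bool.not_true]
        rw [← hω₀def, h1]
        simp
  -- Baire category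
  obtain ⟨i, ω₀, hω₀⟩ := nonempty_interior_of_iUnion_of_closed hEclosed hcover
  obtain ⟨I, u', hIu, hsub⟩ := isOpen_pi_iff.mp isOpen_interior ω₀ hω₀
  refine ⟨I.sup id + 1, fun n hn => ?_⟩
  have hnI : n ∉ I := by
    intro hmem
    have := Finset.le_sup (f := id) hmem
    simp only [id] at this
    omega
  have hω₀E : ω₀ ∈ E i := interior_subset hω₀
  have hω₁pi : Function.update ω₀ n (!(ω₀ n)) ∈ (↑I : Set ℕ).pi u' := by
    intro a ha
    rw [Function.update_of_ne]
    · exact (hIu a ha).2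
    · rintro rfl
      exact hnI ha
  have hω₁E : Function.update ω₀ n (!(ω₀ n)) ∈ E i := interior_subset (hsub hω₁pi)
  have h1 : ‖f (Function.update ω₀ n (!(ω₀ n))) - c i‖ ≤ ε / 3 := hω₁E
  have h2 : ‖f ω₀ - c i‖ ≤ ε / 3 := hω₀E
  have h3 : ‖f (Function.update ω₀ n (!(ω₀ n))) - f ω₀‖ ≤ ε / 3 + ε / 3 := by
    calc ‖f (Function.update ω₀ n (!(ω₀ n))) - f ω₀‖
        = ‖(f (Function.update ω₀ n (!(ω₀ n))) - c i) - (f ω₀ - c i)‖ := by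
          rw [sub_sub_sub_cancel_right]
      _ ≤ ‖f (Function.update ω₀ n (!(ω₀ n))) - c i‖ + ‖f ω₀ - c i‖ := norm_sub_le _ _
      _ ≤ ε / 3 + ε / 3 := add_le_add h1 h2
  rw [hflip] at h3
  linarith

/-- Orlicz–Pettis type consequence: if every subseries of `∑ xₙ` has weakly convergent
partial sums (over finite subsets), then `∑ xₙ` converges unconditionally in norm. -/
theorem stmt0 {X : Type*} [NormedAddCommGroup X] [NormedSpace ℝ X] [CompleteSpace X]
    (x : ℕ → X)
    (h : ∀ M : Set ℕ, ∃ a : X, ∀ φ : X →L[ℝ] ℝ,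
      HasSum (fun n : M => φ (x (↑n))) (φ a)) :
    Summable x := by
  classical
  by_contra hns
  rw [summable_iff_vanishing_norm] at hns
  push_neg at hns
  obtain ⟨ε, hε, H⟩ := hns
  choose T hTdis hTnorm using H
  set U : ℕ → Finset ℕ := fun k => Nat.rec (∅ : Finset ℕ) (fun _ u => u ∪ T u) k with hU
  have hUs : ∀ k, U (k + 1) = U k ∪ T (U k) := fun k => rfl
  set B : ℕ → Finset ℕ := fun k => T (U k) with hB
  have hUmono : Monotone U :=
    monotone_nat_of_le_succ (fun k => by rw [hUs]; exact Finset.subset_union_left)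
  have hBU : ∀ j k, j < k → B j ⊆ U k := by
    intro j k hjk
    have h1 : B j ⊆ U (j + 1) := by rw [hUs]; exact Finset.subset_union_right
    exact h1.trans (hUmono hjk)
  have hdisj : Pairwise (Function.onFun Disjoint fun k => B k) := by
    intro j k hjk
    rcases lt_or_gt_of_ne hjk with hlt | hgt
    · exact ((hTdis (U k)).mono_right (Finset.coe_subset.mp (by exact_mod_cast hBU j k hlt))).symm
    · exact (hTdis (U j)).mono_right (hBU k j hgt)
  set z : ℕ → X := fun k => ∑ n ∈ B k, x n with hz
  have hznorm : ∀ k, ε ≤ ‖z k‖ := fun k => hTnorm (U k)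
  have hzh : ∀ K : Set ℕ, ∃ a : X, ∀ φ : X →L[ℝ] ℝ,
      HasSum (fun k : K => φ (z ↑k)) (φ a) := by
    intro K
    set t : K → Set ℕ := fun k => (↑(B ↑k) : Set ℕ) with ht
    have hdisjK : Pairwise (Function.onFun Disjoint t) := by
      intro j k hjk
      have hne : (j : ℕ) ≠ (k : ℕ) := fun hcon => hjk (Subtype.ext hcon)
      have hd := hdisj hne
      simp only [Function.onFun, ht]
      exact Finset.disjoint_coe.mpr hd
    obtain ⟨a, ha⟩ := h (⋃ k, t k)
    refine ⟨a, fun φ => ?_⟩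
    have h1 : HasSum (fun n : (⋃ k, t k) => φ (x ↑n)) (φ a) := ha φ
    set e := Set.unionEqSigmaOfDisjoint hdisjK with he
    have h2 : HasSum ((fun n : (⋃ k, t k) => φ (x ↑n)) ∘ e.symm) (φ a) :=
      (Equiv.hasSum_iff e.symm).mpr h1
    have h3 : ((fun n : (⋃ k, t k) => φ (x ↑n)) ∘ e.symm)
        = fun p : Σ k : K, t k => φ (x ↑p.2) := by
      funext p
      rfl
    rw [h3] at h2
    apply h2.sigma
    intro k
    have h5 : HasSum ((fun n => φ (x n)) ∘ (Subtype.val : (B (k : ℕ) : Finset ℕ) → ℕ))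
        (∑ n ∈ B (k : ℕ), φ (x n)) := (B (k : ℕ)).hasSum (fun n => φ (x n))
    have h6 : (∑ n ∈ B (k : ℕ), φ (x n)) = φ (z ↑k) := by
      rw [hz, map_sum]
    rw [h6] at h5
    exact h5
  obtain ⟨N, hN⟩ := op_key z hzh (half_pos hε)
  have h1 := hN N le_rfl
  have h2 := hznorm N
  linarith
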